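/- Let S, I, R, B : [0,∞) → ℝ be a solution of the SIRB system S' = −βSI, I' = βSI − γI + βσαIR, R' = γI − βσIR, B' = βσ(1−α)IR with β>0, γ>0, σ>1, 0<α<1, initial conditions S(0)>0, I(0)>0, R(0)≥0, B(0)≥0, S(0)+I(0)+R(0)+B(0)=1, and suppose S(t)>0 and I(t)>0 for all t≥0. Assume the basic reproduction number ℛ₀ := (β/γ)(S(0) + ασR(0)) satisfies ℛ₀ ≤ 1 and (β/γ)·(S(0) + ασ²R(0)) ≥ ασ. Then I is monotonically decreasing on [0,∞) and I(t) → 0 as t → ∞. -/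

import Mathlib

open Set Filter MeasureTheory intervalIntegral Real

/-- For `σ > 1`, if `ℛ₀ ≤ 1` and `(β/γ)(S(0) + ασ²R(0)) ≥ ασ`, then `I`
is monotonically decreasing on `[0,∞)` and `I(t) → 0` as `t → ∞`. -/
theorem sirb_no_epidemic_case1 (β γ σ α : ℝ) (S I R B : ℝ → ℝ)
    (hβ : 0 < β) (hγ : 0 < γ) (hσ : 1 < σ) (hα0 : 0 < α) (hα1 : α < 1)
    (hS' : ∀ t : ℝ, 0 ≤ t → HasDerivAt S (-(β * S t * I t)) t)
    (hI' : ∀ t : ℝ, 0 ≤ t → HasDerivAt I (β * S t * I t - γ * I t + β * σ * α * I t * R t) t)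
    (hR' : ∀ t : ℝ, 0 ≤ t → HasDerivAt R (γ * I t - β * σ * I t * R t) t)
    (hB' : ∀ t : ℝ, 0 ≤ t → HasDerivAt B (β * σ * (1 - α) * I t * R t) t)
    (hS0 : 0 < S 0) (hI0 : 0 < I 0) (hR0 : 0 ≤ R 0) (hB0 : 0 ≤ B 0)
    (hsum : S 0 + I 0 + R 0 + B 0 = 1)
    (hSpos : ∀ t : ℝ, 0 ≤ t → 0 < S t) (hIpos : ∀ t : ℝ, 0 ≤ t → 0 < I t)
    (hR0le : β / γ * (S 0 + α * σ * R 0) ≤ 1)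
    (hcase : α * σ ≤ β / γ * (S 0 + α * σ ^ 2 * R 0)) :
    StrictAntiOn I (Set.Ici 0) ∧ Filter.Tendsto I Filter.atTop (nhds 0) := by
  have hγ' : γ ≠ 0 := ne_of_gt hγ
  -- continuity of S, I, R on [0,∞)
  have hIca : ∀ t ∈ Ici (0:ℝ), ContinuousAt I t := fun t ht => (hI' t ht).continuousAt
  have hIcont : ContinuousOn I (Ici 0) := fun t ht => (hIca t ht).continuousWithinAt
  have hScont : ContinuousOn S (Ici 0) := fun t ht => (hS' t ht).continuousAt.continuousWithinAt
  have hRcont : ContinuousOn R (Ici 0) := fun t ht => (hR' t ht).continuousAt.continuousWithinAt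
  -- the primitive of I based at 1
  set J : ℝ → ℝ := fun t => ∫ s in (1:ℝ)..t, I s with hJdef
  have hJint : ∀ t : ℝ, 0 < t → IntervalIntegrable I volume 1 t := by
    intro t ht
    apply ContinuousOn.intervalIntegrable
    exact hIcont.mono fun x hx => le_trans (le_min zero_le_one ht.le) hx.1
  have hJd : ∀ t : ℝ, 0 < t → HasDerivAt J (I t) t := by
    intro t ht
    exact integral_hasDerivAt_right (hJint t ht)
      (ContinuousAt.stronglyMeasurableAtFilter isOpen_Ioi
        (fun x hx => hIca x (le_of_lt hx)) t ht)
      (hIca t ht.le)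
  have hJcont : ContinuousOn J (Ici 0) := by
    intro x hx
    have h1 : ContinuousWithinAt J (Icc 0 (x+1)) x := by
      apply intervalIntegral.continuousWithinAt_primitive (measure_singleton x)
      apply ContinuousOn.intervalIntegrable
      apply hIcont.mono
      intro y hy
      have h2 := hy.1
      have h0 : (1:ℝ) ⊓ 0 ⊓ (1 ⊔ (x+1)) = 0 := by
        rw [min_eq_right zero_le_one]
        exact min_eq_left (le_trans zero_le_one (le_max_left _ _))
      exact le_of_eq_of_le h0.symm h2
    have hmem : Icc 0 (x+1) ∈ nhdsWithin x (Ici 0) := by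
      have := inter_mem_nhdsWithin (Ici (0:ℝ)) (Iio_mem_nhds (lt_add_one x))
      exact mem_of_superset this (fun y hy => ⟨hy.1, hy.2.le⟩)
    exact h1.mono_of_mem_nhdsWithin hmem
  -- the auxiliary quantities Q, F, P
  set Q : ℝ → ℝ := fun t => β / γ * (S t + α * σ ^ 2 * R t) - α * σ with hQdef
  set F : ℝ → ℝ := fun t => Q t * Real.exp (σ * β * J t) with hFdef
  set P : ℝ → ℝ := fun t => β * (S t + α * σ * R t) - γ with hPdef
  have hQd : ∀ t : ℝ, 0 ≤ t → HasDerivAt Q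
      (β / γ * (-(β * S t * I t) + α * σ ^ 2 * (γ * I t - β * σ * I t * R t))) t := by
    intro t ht
    exact (((hS' t ht).add ((hR' t ht).const_mul (α * σ ^ 2))).const_mul (β / γ)).sub_const _
  have hQcont : ContinuousOn Q (Ici 0) :=
    (((hScont.add (hRcont.const_smul (α * σ ^ 2))).const_smul (β / γ)).sub continuousOn_const)
  have hPcont : ContinuousOn P (Ici 0) :=
    (((hScont.add (hRcont.const_smul (α * σ))).const_smul β).sub continuousOn_const)
  have hFcont : ContinuousOn F (Ici 0) :=
    hQcont.mul ((Real.continuous_exp.comp_continuousOn (hJcont.const_smul (σ * β))))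
  -- F has positive derivative on (0,∞)
  have hFd : ∀ t : ℝ, 0 < t → HasDerivAt F
      (β ^ 2 * S t * I t * (σ - 1) / γ * Real.exp (σ * β * J t)) t := by
    intro t ht
    have h1 := (hQd t ht.le).mul (((hJd t ht).const_mul (σ * β)).exp)
    refine h1.congr_deriv ?_
    simp only [hQdef]
    field_simp
    ring
  have hFmono : StrictMonoOn F (Ici 0) := by
    apply strictMonoOn_of_deriv_pos (convex_Ici 0) hFcont
    intro t ht
    rw [interior_Ici] at ht
    rw [(hFd t ht).deriv]
    have hst := hSpos t ht.le
    have hit := hIpos t ht.le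
    have h1 : (0:ℝ) < σ - 1 := by linarith
    positivity
  have hQ0 : 0 ≤ Q 0 := by simp only [hQdef]; linarith
  have hQpos : ∀ t : ℝ, 0 < t → 0 < Q t := by
    intro t ht
    have h1 : F 0 < F t := hFmono (le_refl (0:ℝ)) ht.le ht
    have h2 : 0 ≤ F 0 := mul_nonneg hQ0 (Real.exp_pos _).le
    have h3 : 0 < Q t * Real.exp (σ * β * J t) := lt_of_le_of_lt h2 h1
    by_contra h
    push_neg at h
    nlinarith [Real.exp_pos (σ * β * J t)]
  -- P is strictly decreasing
  have hPd : ∀ t : ℝ, 0 ≤ t → HasDerivAt P (-(β * γ * I t * Q t)) t := by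
    intro t ht
    have h1 := (((hS' t ht).add ((hR' t ht).const_mul (α * σ))).const_mul β).sub_const γ
    refine h1.congr_deriv ?_
    simp only [hQdef]
    field_simp
    ring
  have hPanti : StrictAntiOn P (Ici 0) := by
    apply strictAntiOn_of_deriv_neg (convex_Ici 0) hPcont
    intro t ht
    rw [interior_Ici] at ht
    rw [(hPd t ht.le).deriv]
    have := hIpos t ht.le
    have := hQpos t ht
    have : 0 < β * γ * I t * Q t := by positivity
    linarith
  have hP0 : P 0 ≤ 0 := by
    simp only [hPdef]
    have := (div_le_one hγ).mp (by rw [div_mul_eq_mul_div] at hR0le; exact hR0le)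
    linarith
  have hPneg : ∀ t : ℝ, 0 < t → P t < 0 := fun t ht =>
    lt_of_lt_of_le (hPanti (le_refl (0:ℝ)) ht.le ht) hP0
  -- I' = I * P
  have hId : ∀ t : ℝ, 0 ≤ t → HasDerivAt I (I t * P t) t := by
    intro t ht
    convert hI' t ht using 1
    simp only [hPdef]; ring
  -- first conclusion : I strictly decreasing on [0,∞)
  have hIanti : StrictAntiOn I (Ici 0) := by
    apply strictAntiOn_of_deriv_neg (convex_Ici 0) hIcont
    intro t ht
    rw [interior_Ici] at ht
    rw [(hId t ht.le).deriv]
    exact mul_neg_of_pos_of_neg (hIpos t ht.le) (hPneg t ht)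
  refine ⟨hIanti, ?_⟩
  -- the limit
  set g : ℝ → ℝ := fun t => I (max t 0) with hgdef
  have hganti : Antitone g := by
    intro s t hst
    exact (hIanti.antitoneOn) (le_max_right s 0) (le_max_right t 0) (max_le_max hst le_rfl)
  have hgbdd : BddBelow (range g) := by
    refine ⟨0, ?_⟩
    rintro y ⟨t, rfl⟩
    exact (hIpos _ (le_max_right t 0)).le
  have hgL := tendsto_atTop_ciInf hganti hgbdd
  set L : ℝ := ⨅ t, g t with hLdef
  have hL0 : 0 ≤ L := le_ciInf fun t => (hIpos _ (le_max_right t 0)).le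
  have hLle : ∀ t : ℝ, 0 ≤ t → L ≤ I t := by
    intro t ht
    have h1 : L ≤ g t := ciInf_le hgbdd t
    simpa [hgdef, max_eq_left ht] using h1
  have hIg : I =ᶠ[atTop] g := by
    filter_upwards [eventually_ge_atTop (0:ℝ)] with t ht
    simp [hgdef, max_eq_left ht]
  have hItend : Tendsto I atTop (nhds L) := Tendsto.congr' hIg.symm hgL
  -- show L = 0
  have hLeq : L = 0 := by
    by_contra hne
    have hLpos : 0 < L := lt_of_le_of_ne hL0 (Ne.symm hne)
    set c : ℝ := -P 1 with hcdef
    have hc : 0 < c := by simp only [hcdef]; linarith [hPneg 1 one_pos]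
    -- the function h t = I t + c * L * t is antitone on [1,∞)
    set h : ℝ → ℝ := fun t => I t + c * L * t with hhdef
    have hhanti : AntitoneOn h (Ici 1) := by
      apply antitoneOn_of_deriv_nonpos (convex_Ici 1)
      · exact (hIcont.mono (Ici_subset_Ici.mpr zero_le_one)).add
          (continuousOn_const.mul continuousOn_id)
      · intro t ht
        rw [interior_Ici] at ht
        have h0t : (0:ℝ) ≤ t := le_trans zero_le_one ht.le
        exact ((hId t h0t).add
          ((hasDerivAt_id t).const_mul (c*L))).differentiableAt.differentiableWithinAt
      · intro t ht
        rw [interior_Ici] at ht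
        have h0t : (0:ℝ) ≤ t := le_trans zero_le_one ht.le
        have hd : HasDerivAt h (I t * P t + c * L) t := by
          have hd0 := (hId t h0t).add ((hasDerivAt_id t).const_mul (c*L))
          exact hd0.congr_deriv (by ring)
        rw [hd.deriv]
        have h1 : P t ≤ P 1 := (hPanti.antitoneOn (le_trans zero_le_one (le_refl 1) : (0:ℝ) ≤ 1) h0t ht.le : P t ≤ P 1)
        have h2 : I t * P t ≤ L * P 1 := by
          have hIt := hIpos t h0t
          have hLt := hLle t h0t
          nlinarith [hPneg 1 one_pos]
        have : P 1 = -c := by simp [hcdef]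
        nlinarith
    -- derive contradiction at a large time
    set T : ℝ := 1 + (I 1 + 1) / (c * L) with hTdef
    have hT1 : 1 ≤ T := by
      have : 0 < (I 1 + 1) / (c * L) := by
        apply div_pos (by linarith [hIpos 1 zero_le_one]) (by positivity)
      simp only [hTdef]; linarith
    have hhT := hhanti (self_mem_Ici) hT1 hT1
    have hIT : 0 < I T := hIpos T (le_trans zero_le_one hT1)
    have hcL : c * L * T = c * L + (I 1 + 1) := by
      simp only [hTdef]
      field_simp
    simp only [hhdef] at hhT
    rw [hcL] at hhT
    -- hhT : I T + (c*L + I 1 + 1) ≤ I 1 + c*L*1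
    nlinarith
  rw [hLeq] at hItend
  exact hItend
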